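/- For every prime number p, the quadratic form x₁² + x₂² + x₃² + x₄² in four variables over the ring ℤ_p of p-adic integers is equivalent (isometric) to the quadratic form −x₁² − x₂² − x₃² − x₄². -/

import Mathlib

open Polynomial

lemma padic_sqrt {p : ℕ} [Fact p.Prime] (c a₀ : ℤ_[p])
    (h : ‖a₀ ^ 2 - c‖ < ‖2 * a₀‖ ^ 2) : ∃ z : ℤ_[p], z ^ 2 = c := by
  have hd : ((X ^ 2 - C c : ℤ_[p][X]).derivative) = C 2 * X := by
    simp [derivative_pow]
  have h' : ‖(X ^ 2 - C c : ℤ_[p][X]).eval a₀‖ <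
      ‖((X ^ 2 - C c : ℤ_[p][X]).derivative).eval a₀‖ ^ 2 := by
    rw [hd]; simpa using h
  obtain ⟨z, hz, -⟩ := hensels_lemma h'
  exact ⟨z, by simpa [sub_eq_zero] using hz⟩

lemma toZMod_zero_iff {p : ℕ} [Fact p.Prime] (x : ℤ_[p]) :
    PadicInt.toZMod x = 0 ↔ ‖x‖ < 1 := by
  rw [← RingHom.mem_ker, PadicInt.ker_toZMod, PadicInt.maximalIdeal_eq_span_p,
    Ideal.mem_span_singleton, ← PadicInt.norm_lt_one_iff_dvd]

lemma norm_one_of_toZMod_ne {p : ℕ} [Fact p.Prime] (x : ℤ_[p])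
    (h : PadicInt.toZMod x ≠ 0) : ‖x‖ = 1 := by
  have h1 := x.norm_le_one
  have h2 := (toZMod_zero_iff x).not.mp h
  linarith [lt_or_eq_of_le h1, h1]

lemma exists_sum_four_sq_neg_one (p : ℕ) [Fact p.Prime] :
    ∃ a b c d : ℤ_[p], a ^ 2 + b ^ 2 + c ^ 2 + d ^ 2 = -1 := by
  by_cases hp2 : p = 2
  · subst hp2
    have hnorm : ‖(1 : ℤ_[2]) ^ 2 - (-7)‖ < ‖2 * (1 : ℤ_[2])‖ ^ 2 := by
      have h8 : ((1 : ℤ_[2]) ^ 2 - (-7)) = (2 : ℤ_[2]) ^ 3 := by norm_num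
      have hn : ‖(2 : ℤ_[2])‖ = (2 : ℝ)⁻¹ := by
        simpa using PadicInt.norm_p (p := 2)
      rw [h8, mul_one, norm_pow, hn]
      norm_num
    obtain ⟨z, hz⟩ := padic_sqrt (-7 : ℤ_[2]) 1 hnorm
    exact ⟨z, 1, 1, 2, by rw [hz]; ring⟩
  · -- p odd
    have hodd : (2 : ZMod p) ≠ 0 := by
      intro h
      have := (ZMod.natCast_eq_zero_iff 2 p).mp (by exact_mod_cast h)
      exact hp2 ((Nat.prime_dvd_prime_iff_eq (Fact.out) Nat.prime_two).mp this)
    obtain ⟨a, b, hab⟩ := ZMod.sq_add_sq p (-1)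
    obtain ⟨a, b, hab, ha⟩ : ∃ a b : ZMod p, a ^ 2 + b ^ 2 = -1 ∧ a ≠ 0 := by
      by_cases ha : a = 0
      · refine ⟨b, a, by rw [add_comm]; exact hab, fun hb => ?_⟩
        rw [ha, hb] at hab
        simp at hab
      · exact ⟨a, b, hab, ha⟩
    set A : ℤ_[p] := (a.val : ℤ_[p]) with hA
    set B : ℤ_[p] := (b.val : ℤ_[p]) with hB
    have htA : PadicInt.toZMod A = a := by
      rw [hA, map_natCast, ZMod.natCast_val, ZMod.cast_id]
    have htB : PadicInt.toZMod B = b := by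
      rw [hB, map_natCast, ZMod.natCast_val, ZMod.cast_id]
    have h1 : ‖2 * A‖ = 1 := by
      apply norm_one_of_toZMod_ne
      rw [map_mul, map_ofNat, htA]
      exact mul_ne_zero hodd ha
    have hnorm : ‖A ^ 2 - (-1 - B ^ 2)‖ < ‖2 * A‖ ^ 2 := by
      rw [h1, one_pow, ← toZMod_zero_iff]
      rw [map_sub, map_pow, map_sub, map_neg, map_one, map_pow, htA, htB]
      linear_combination hab
    obtain ⟨z, hz⟩ := padic_sqrt (-1 - B ^ 2) A hnorm
    exact ⟨z, B, 0, 0, by rw [hz]; ring⟩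

open Matrix in
lemma quat_equiv {R : Type*} [CommRing R] {a b c d : R}
    (h : a ^ 2 + b ^ 2 + c ^ 2 + d ^ 2 = -1) :
    (QuadraticMap.weightedSumSquares R (fun _ : Fin 4 => (1 : R))).Equivalent
      (QuadraticMap.weightedSumSquares R (fun _ : Fin 4 => (-1 : R))) := by
  set M : Matrix (Fin 4) (Fin 4) R :=
    !![a,-b,-c,-d; b,a,-d,c; c,d,a,-b; d,-c,b,a] with hM
  set N : Matrix (Fin 4) (Fin 4) R := -Mᵀ with hN
  have hMN : M * N = 1 := by
    ext i j
    fin_cases i <;> fin_cases j <;>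
      simp [hM, hN, Matrix.mul_apply, Matrix.neg_apply, Matrix.transpose_apply,
        Fin.sum_univ_four, Matrix.one_apply, Matrix.vecHead, Matrix.vecTail] <;>
      first
      | ring1
      | linear_combination h
      | linear_combination -h
  have hNM : N * M = 1 := by
    ext i j
    fin_cases i <;> fin_cases j <;>
      simp [hM, hN, Matrix.mul_apply, Matrix.neg_apply, Matrix.transpose_apply,
        Fin.sum_univ_four, Matrix.one_apply, Matrix.vecHead, Matrix.vecTail] <;>
      first
      | ring1
      | linear_combination h
      | linear_combination -h
  refine ⟨{ toLinearEquiv := LinearEquiv.ofLinear (Matrix.toLin' M) (Matrix.toLin' N) ?_ ?_,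
            map_app' := ?_ }⟩
  · rw [← Matrix.toLin'_mul, hMN, Matrix.toLin'_one]
  · rw [← Matrix.toLin'_mul, hNM, Matrix.toLin'_one]
  · intro v
    show QuadraticMap.weightedSumSquares R _ ((Matrix.toLin' M) v) = _
    simp [QuadraticMap.weightedSumSquares_apply, Matrix.toLin'_apply, Matrix.mulVec,
      dotProduct, Fin.sum_univ_four, hM, smul_eq_mul, Matrix.vecHead, Matrix.vecTail]
    first
    | linear_combination (v 0 ^ 2 + v 1 ^ 2 + v 2 ^ 2 + v 3 ^ 2) * h
    | linear_combination (-(v 0 ^ 2 + v 1 ^ 2 + v 2 ^ 2 + v 3 ^ 2)) * h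

theorem sum_four_squares_equiv_neg_sum_four_squares_padicInt (p : ℕ) [Fact p.Prime] :
    (QuadraticMap.weightedSumSquares ℤ_[p] (fun _ : Fin 4 => (1 : ℤ_[p]))).Equivalent
      (QuadraticMap.weightedSumSquares ℤ_[p] (fun _ : Fin 4 => (-1 : ℤ_[p]))) := by
  obtain ⟨a, b, c, d, h⟩ := exists_sum_four_sq_neg_one p
  exact quat_equiv h
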